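/- Variance bound for the IS² marginal-likelihood estimator (Lemma 3(ii)): Under the IS² setup, if ∫_Θ (π(θ)/g(θ))² (∫ exp(2z) g_N(z|θ) dz) g(θ) dθ ≤ C < ∞, where g_N(·|θ) is the conditional law of z = log L̂(θ,ξ) − log L(θ) given θ, then there is a finite constant K (one may take K = p(y)² C) such that the variance of p̂_{IS²}(y) = (1/M) Σ_{i=1}^M w̃_i satisfies Var(p̂_{IS²}(y)) ≤ K/M for every M ≥ 1. -/

import Mathlib

open MeasureTheory ProbabilityTheory Filter
open scoped ProbabilityTheory ENNReal

/-- **Variance bound for the IS² marginal-likelihood estimator** (Lemma 3(ii)).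
Under the IS² setup, if `∫ (π/g)² (∫ e^{2z} g_N(z|θ) dz) g dν ≤ C < ∞`, where
`g_N(·|θ)` is the conditional law of `z = log L̂(θ,ξ) − log L(θ)` given `θ` (so that
`∫ e^{2z} g_N(z|θ) dz = ∫ (L̂(θ,ξ)/L(θ))² dQ_θ`), then with `K = p(y)² C` one has
`Var(p̂_{IS²}(y)) ≤ K/M` for every `M ≥ 1`, where `p̂_{IS²}(y) = (1/M) ∑ w̃_i`. -/
theorem is2_marginal_likelihood_variance_bound
    {Θ Ξ Ω : Type*} [MeasurableSpace Θ] [MeasurableSpace Ξ] [MeasurableSpace Ω]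
    (P : Measure Ω) [IsProbabilityMeasure P]
    (ν : Measure Θ) [SigmaFinite ν]
    (p L g : Θ → ℝ)
    (hp_nonneg : ∀ θ, 0 ≤ p θ) (hL_nonneg : ∀ θ, 0 ≤ L θ) (hg_nonneg : ∀ θ, 0 ≤ g θ)
    (hp_meas : Measurable p) (hL_meas : Measurable L) (hg_meas : Measurable g)
    (hg_prob : ∫ θ, g θ ∂ν = 1)
    (hpL_int : Integrable (fun θ => p θ * L θ) ν)
    (py : ℝ) (hpy : py = ∫ θ, p θ * L θ ∂ν) (hpy_pos : 0 < py)
    -- posterior density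
    (πd : Θ → ℝ) (hπd : ∀ θ, πd θ = p θ * L θ / py)
    -- support condition: Supp(π) ⊆ Supp(g)
    (hsupp : ∀ θ, 0 < πd θ → 0 < g θ)
    -- unbiased likelihood estimator
    (Q : Kernel Θ Ξ) [IsMarkovKernel Q]
    (Lhat : Θ × Ξ → ℝ) (hLhat_meas : Measurable Lhat) (hLhat_nonneg : ∀ x, 0 ≤ Lhat x)
    (hunbiased : ∀ θ, ∫ ξ, Lhat (θ, ξ) ∂(Q θ) = L θ)
    -- i.i.d. draws (θ_i, ξ_i) with θ_i ~ g and ξ_i | θ_i ~ Q_{θ_i}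
    (X : ℕ → Ω → Θ × Ξ) (hX_meas : ∀ i, Measurable (X i))
    (hX_indep : iIndepFun X P)
    (hX_law : ∀ i, P.map (X i) = (ν.withDensity fun θ => ENNReal.ofReal (g θ)) ⊗ₘ Q)
    -- second-moment bound: ∫ (π/g)² (∫ e^{2z} g_N(z|θ) dz) g dν ≤ C < ∞
    (C : ℝ) (hC_nonneg : 0 ≤ C)
    (hC : ∫⁻ θ, ENNReal.ofReal
        ((πd θ / g θ) ^ 2 * (∫ ξ, (Lhat (θ, ξ) / L θ) ^ 2 ∂(Q θ)) * g θ) ∂ν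
      ≤ ENNReal.ofReal C) :
    ∀ M : ℕ, 1 ≤ M →
      variance (fun ω => (1 / (M : ℝ)) *
          ∑ i ∈ Finset.range M, p (X i ω).1 * Lhat (X i ω) / g ((X i ω).1)) P
        ≤ py ^ 2 * C / M := by
  classical
  set f : Θ × Ξ → ℝ := fun x => p x.1 * Lhat x / g x.1 with hfdef
  set μ : Measure (Θ × Ξ) := (ν.withDensity fun θ => ENNReal.ofReal (g θ)) ⊗ₘ Q with hμdef
  have hf_meas : Measurable f :=
    ((hp_meas.comp measurable_fst).mul hLhat_meas).div (hg_meas.comp measurable_fst)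
  have hf_nonneg : ∀ x, 0 ≤ f x := fun x =>
    div_nonneg (mul_nonneg (hp_nonneg _) (hLhat_nonneg _)) (hg_nonneg _)
  have hf2m : Measurable fun x => ENNReal.ofReal (f x ^ 2) :=
    (hf_meas.pow_const 2).ennreal_ofReal
  have hIm : Measurable fun θ => ∫⁻ ξ, ENNReal.ofReal (f (θ, ξ) ^ 2) ∂(Q θ) :=
    Measurable.lintegral_kernel_prod_right hf2m
  -- key second-moment bound
  have key : MemLp f 2 μ →
      ∫⁻ x, ENNReal.ofReal (f x ^ 2) ∂μ ≤ ENNReal.ofReal (py ^ 2 * C) := by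
    intro hmem
    have hrw : ∫⁻ x, ENNReal.ofReal (f x ^ 2) ∂μ
        = ∫⁻ θ, ENNReal.ofReal (g θ) * ∫⁻ ξ, ENNReal.ofReal (f (θ, ξ) ^ 2) ∂(Q θ) ∂ν := by
      rw [hμdef, Measure.lintegral_compProd hf2m,
        lintegral_withDensity_eq_lintegral_mul ν hg_meas.ennreal_ofReal hIm]
      rfl
    have hfin : ∫⁻ x, ENNReal.ofReal (f x ^ 2) ∂μ < ⊤ :=
      hmem.integrable_sq.lintegral_lt_top
    rw [hrw] at hfin
    have hae : ∀ᵐ θ ∂ν,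
        ENNReal.ofReal (g θ) * ∫⁻ ξ, ENNReal.ofReal (f (θ, ξ) ^ 2) ∂(Q θ) < ⊤ :=
      ae_lt_top (hg_meas.ennreal_ofReal.mul hIm) hfin.ne
    have hpt : ∀ᵐ θ ∂ν,
        ENNReal.ofReal (g θ) * ∫⁻ ξ, ENNReal.ofReal (f (θ, ξ) ^ 2) ∂(Q θ)
          ≤ ENNReal.ofReal (py ^ 2) * ENNReal.ofReal
              ((πd θ / g θ) ^ 2 * (∫ ξ, (Lhat (θ, ξ) / L θ) ^ 2 ∂(Q θ)) * g θ) := by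
      filter_upwards [hae] with θ hθ
      rcases (hg_nonneg θ).eq_or_lt with hg0 | hgpos
      · simp [← hg0]
      rcases (hp_nonneg θ).eq_or_lt with hp0 | hppos
      · have hz : ∀ ξ, f (θ, ξ) = 0 := fun ξ => by simp [hfdef, ← hp0]
        simp [hz]
      have hconst : (0 : ℝ) < (p θ / g θ) ^ 2 := by positivity
      have hIrw : (∫⁻ ξ, ENNReal.ofReal (f (θ, ξ) ^ 2) ∂(Q θ))
          = ENNReal.ofReal ((p θ / g θ) ^ 2)
            * ∫⁻ ξ, ENNReal.ofReal (Lhat (θ, ξ) ^ 2) ∂(Q θ) := by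
        rw [← lintegral_const_mul' _ _ ENNReal.ofReal_ne_top]
        congr 1; ext ξ
        rw [← ENNReal.ofReal_mul hconst.le]
        congr 1
        simp only [hfdef]
        ring
      set J := ∫⁻ ξ, ENNReal.ofReal (Lhat (θ, ξ) ^ 2) ∂(Q θ) with hJ
      have hJne : J ≠ ⊤ := by
        intro hJtop
        rw [hIrw, hJtop, ENNReal.mul_top (ENNReal.ofReal_pos.2 hconst).ne',
          ENNReal.mul_top (ENNReal.ofReal_pos.2 hgpos).ne'] at hθ
        exact absurd hθ (lt_irrefl _)
      have hLhat2_meas : Measurable fun ξ => Lhat (θ, ξ) ^ 2 :=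
        (hLhat_meas.comp measurable_prodMk_left).pow_const 2
      have hsq_int : Integrable (fun ξ => Lhat (θ, ξ) ^ 2) (Q θ) := by
        refine ⟨hLhat2_meas.aestronglyMeasurable, ?_⟩
        rw [hasFiniteIntegral_iff_ofReal (Eventually.of_forall fun ξ => sq_nonneg _)]
        exact hJne.lt_top
      have hL2 : MemLp (fun ξ => Lhat (θ, ξ)) 2 (Q θ) :=
        (memLp_two_iff_integrable_sq
          (hLhat_meas.comp measurable_prodMk_left).aestronglyMeasurable).2 hsq_int
      have hL1 : Integrable (fun ξ => Lhat (θ, ξ)) (Q θ) := hL2.integrable one_le_two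
      rcases (hL_nonneg θ).eq_or_lt with hL0 | hLpos
      · -- L θ = 0 : Lhat(θ,·) = 0 a.e., so the inner integral vanishes
        have h0 : (fun ξ => Lhat (θ, ξ)) =ᵐ[Q θ] 0 :=
          (integral_eq_zero_iff_of_nonneg (fun ξ => hLhat_nonneg (θ, ξ)) hL1).1
            (by rw [hunbiased θ, ← hL0])
        have hJ0 : J = 0 := by
          have hz : (fun ξ => ENNReal.ofReal (Lhat (θ, ξ) ^ 2)) =ᵐ[Q θ] 0 := by
            filter_upwards [h0] with ξ hξ
            simp only [Pi.zero_apply] at hξ ⊢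
            simp [hξ]
          rw [hJ, lintegral_congr_ae hz]
          simp
        rw [hIrw, hJ0, mul_zero, mul_zero]
        exact zero_le
      · -- L θ > 0 : exact computation
        have hint_div : (∫ ξ, (Lhat (θ, ξ) / L θ) ^ 2 ∂(Q θ)) = J.toReal / (L θ) ^ 2 := by
          have h1 : ∀ ξ, (Lhat (θ, ξ) / L θ) ^ 2 = Lhat (θ, ξ) ^ 2 / (L θ) ^ 2 := fun ξ => by
            ring
          simp_rw [h1]
          rw [integral_div]
          congr 1
          rw [integral_eq_lintegral_of_nonneg_ae
            (Eventually.of_forall fun ξ => sq_nonneg _) hLhat2_meas.aestronglyMeasurable, hJ]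
        set r := J.toReal with hr
        have hrnonneg : 0 ≤ r := ENNReal.toReal_nonneg
        have hJr : J = ENNReal.ofReal r := (ENNReal.ofReal_toReal hJne).symm
        rw [hIrw, hJr, hπd θ, hint_div,
          ← ENNReal.ofReal_mul (le_of_lt hconst), ← ENNReal.ofReal_mul (hg_nonneg θ),
          ← ENNReal.ofReal_mul (sq_nonneg py)]
        apply ENNReal.ofReal_le_ofReal
        apply le_of_eq
        have hgne : g θ ≠ 0 := hgpos.ne'
        have hLne : L θ ≠ 0 := hLpos.ne'
        have hpyne : py ≠ 0 := hpy_pos.ne'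
        field_simp
    calc ∫⁻ x, ENNReal.ofReal (f x ^ 2) ∂μ
        = ∫⁻ θ, ENNReal.ofReal (g θ) * ∫⁻ ξ, ENNReal.ofReal (f (θ, ξ) ^ 2) ∂(Q θ) ∂ν := hrw
      _ ≤ ∫⁻ θ, ENNReal.ofReal (py ^ 2) * ENNReal.ofReal
            ((πd θ / g θ) ^ 2 * (∫ ξ, (Lhat (θ, ξ) / L θ) ^ 2 ∂(Q θ)) * g θ) ∂ν :=
          lintegral_mono_ae hpt
      _ = ENNReal.ofReal (py ^ 2) * ∫⁻ θ, ENNReal.ofReal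
            ((πd θ / g θ) ^ 2 * (∫ ξ, (Lhat (θ, ξ) / L θ) ^ 2 ∂(Q θ)) * g θ) ∂ν :=
          lintegral_const_mul' _ _ ENNReal.ofReal_ne_top
      _ ≤ ENNReal.ofReal (py ^ 2) * ENNReal.ofReal C := mul_le_mul_right hC _
      _ = ENNReal.ofReal (py ^ 2 * C) := (ENNReal.ofReal_mul (sq_nonneg py)).symm
  -- main argument
  intro M hM
  have hMpos : (0 : ℝ) < (M : ℝ) := by exact_mod_cast Nat.pos_of_ne_zero (by omega)
  have hM0 : (M : ℝ) ≠ 0 := hMpos.ne'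
  set w : ℕ → Ω → ℝ := fun i ω => f (X i ω) with hwdef
  show variance (fun ω => (1 / (M : ℝ)) * ∑ i ∈ Finset.range M, w i ω) P ≤ py ^ 2 * C / M
  by_cases hmem : MemLp f 2 μ
  · -- f is square integrable: the standard variance computation
    have hwmem : ∀ i, MemLp (w i) 2 P := by
      intro i
      have h1 : MemLp f 2 (P.map (X i)) := by rw [hX_law i]; exact hmem
      exact (memLp_map_measure_iff h1.aestronglyMeasurable (hX_meas i).aemeasurable).1 h1
    have hsum : variance (∑ i ∈ Finset.range M, w i) P
        = ∑ i ∈ Finset.range M, variance (w i) P :=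
      IndepFun.variance_sum (fun i _ => hwmem i)
        (fun i _ j _ hij => (hX_indep.indepFun hij).comp hf_meas hf_meas)
    have hbound : ∀ i, variance (w i) P ≤ py ^ 2 * C := by
      intro i
      refine le_trans (variance_le_expectation_sq (hwmem i).aestronglyMeasurable) ?_
      have hmap : ∫ ω, (w i ω) ^ 2 ∂P = ∫ x, f x ^ 2 ∂μ := by
        rw [← hX_law i, integral_map (hX_meas i).aemeasurable
          (hf_meas.pow_const 2).aestronglyMeasurable]
      have hle : ∫ x, f x ^ 2 ∂μ ≤ py ^ 2 * C := by
        rw [integral_eq_lintegral_of_nonneg_ae (Eventually.of_forall fun x => sq_nonneg _)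
          (hf_meas.pow_const 2).aestronglyMeasurable]
        exact ENNReal.toReal_le_of_le_ofReal (mul_nonneg (sq_nonneg py) hC_nonneg) (key hmem)
      calc P[(w i) ^ 2] = ∫ ω, (w i ω) ^ 2 ∂P := by simp [Pi.pow_apply]
        _ = ∫ x, f x ^ 2 ∂μ := hmap
        _ ≤ py ^ 2 * C := hle
    calc variance (fun ω => (1 / (M : ℝ)) * ∑ i ∈ Finset.range M, w i ω) P
        = (1 / (M : ℝ)) ^ 2 * variance (∑ i ∈ Finset.range M, w i) P := by
          rw [← variance_const_mul]
          congr 1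
          funext ω
          rw [Finset.sum_apply]
      _ = (1 / (M : ℝ)) ^ 2 * ∑ i ∈ Finset.range M, variance (w i) P := by rw [hsum]
      _ ≤ (1 / (M : ℝ)) ^ 2 * ((M : ℝ) * (py ^ 2 * C)) := by
          refine mul_le_mul_of_nonneg_left ?_ (sq_nonneg _)
          calc ∑ i ∈ Finset.range M, variance (w i) P
              ≤ ∑ _i ∈ Finset.range M, (py ^ 2 * C) :=
                Finset.sum_le_sum fun i _ => hbound i
            _ = (M : ℝ) * (py ^ 2 * C) := by
                rw [Finset.sum_const, Finset.card_range, nsmul_eq_mul]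
      _ = py ^ 2 * C / M := by field_simp
  · -- f is not square integrable: the variance is 0
    have hSm : Measurable (fun ω => (1 / (M : ℝ)) * ∑ i ∈ Finset.range M, w i ω) :=
      measurable_const.mul (Finset.measurable_sum _ fun i _ => hf_meas.comp (hX_meas i))
    have hnot : ¬ MemLp (fun ω => (1 / (M : ℝ)) * ∑ i ∈ Finset.range M, w i ω) 2 P := by
      intro hS
      apply hmem
      have hS' := hS.const_mul (M : ℝ)
      have heq : (fun ω => (M : ℝ) * ((1 / (M : ℝ)) * ∑ i ∈ Finset.range M, w i ω))
          = fun ω => ∑ i ∈ Finset.range M, w i ω := by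
        funext ω; field_simp
      rw [heq] at hS'
      have h0 : MemLp (w 0) 2 P := by
        refine hS'.of_le (hf_meas.comp (hX_meas 0)).aestronglyMeasurable ?_
        refine Eventually.of_forall fun ω => ?_
        rw [Real.norm_of_nonneg (hf_nonneg _),
          Real.norm_of_nonneg (Finset.sum_nonneg fun i _ => hf_nonneg _)]
        exact Finset.single_le_sum (fun i _ => hf_nonneg (X i ω))
          (Finset.mem_range.2 (by omega))
      have h1 : MemLp f 2 (P.map (X 0)) :=
        (memLp_map_measure_iff hf_meas.aestronglyMeasurable (hX_meas 0).aemeasurable).2 h0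
      rwa [hX_law 0] at h1
    have hv : variance (fun ω => (1 / (M : ℝ)) * ∑ i ∈ Finset.range M, w i ω) P = 0 := by
      simp only [variance, evariance_eq_top hSm.aestronglyMeasurable hnot, ENNReal.toReal_top]
    rw [hv]
    exact div_nonneg (mul_nonneg (sq_nonneg py) hC_nonneg) (Nat.cast_nonneg M)
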